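/- For every g ≥ 1, all a, b ∈ ℚ^g, every z ∈ ℂ^g and every Ω ∈ H_g, the family of complex numbers n ↦ exp(iπ·ᵗ(n+a)·Ω·(n+a) + 2iπ·ᵗ(n+a)·(z+b)), indexed by n ∈ ℤ^g, is absolutely summable. -/

import Mathlib

open Matrix Finset Real

lemma theta_coercive {g : ℕ} (hg : 1 ≤ g) (Y : Matrix (Fin g) (Fin g) ℝ) (hY : Y.PosDef) :
    ∃ c > 0, ∀ x : Fin g → ℝ, c * ∑ i, x i ^ 2 ≤ x ⬝ᵥ Y.mulVec x := by
  classical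
  let Q : EuclideanSpace ℝ (Fin g) → ℝ := fun y => ∑ i, y i * ∑ j, Y i j * y j
  have hQeq : ∀ x : Fin g → ℝ, x ⬝ᵥ Y.mulVec x
      = Q ((WithLp.equiv 2 (Fin g → ℝ)).symm x) := fun x => rfl
  have hQc : Continuous Q := by unfold Q; fun_prop
  have hne : (Metric.sphere (0 : EuclideanSpace ℝ (Fin g)) 1).Nonempty := by
    refine ⟨EuclideanSpace.single ⟨0, hg⟩ (1:ℝ), ?_⟩
    simp only [mem_sphere_zero_iff_norm, EuclideanSpace.norm_single, norm_one]
  obtain ⟨u, hu, hmin⟩ := (isCompact_sphere _ 1).exists_isMinOn hne hQc.continuousOn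
  have hu1 : ‖u‖ = 1 := by simpa [mem_sphere_zero_iff_norm] using hu
  have hQposdef : ∀ y : EuclideanSpace ℝ (Fin g), y ≠ 0 → 0 < Q y := by
    intro y hy
    have := hY.dotProduct_mulVec_pos (x := WithLp.equiv 2 (Fin g → ℝ) y) (by
      intro h
      apply hy
      ext i
      exact congrFun h i)
    exact this
  have huc : (0:ℝ) < Q u := hQposdef u (fun h0 => by rw [h0] at hu1; simp at hu1)
  refine ⟨_, huc, fun x => ?_⟩
  rw [hQeq]
  set y : EuclideanSpace ℝ (Fin g) := (WithLp.equiv 2 (Fin g → ℝ)).symm x with hy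
  have hyx : ∀ i, y i = x i := fun i => rfl
  by_cases hx : y = 0
  · have h0 : ∀ i, x i = 0 := fun i => by rw [← hyx i, hx]; rfl
    have : Q y = 0 := by simp [Q, hx]
    simp [this, h0]
  · set t : ℝ := ‖y‖ with ht
    have ht0 : 0 < t := norm_pos_iff.mpr hx
    have hxs : t⁻¹ • y ∈ Metric.sphere (0 : EuclideanSpace ℝ (Fin g)) 1 := by
      rw [mem_sphere_zero_iff_norm, norm_smul, norm_inv, Real.norm_eq_abs, abs_of_pos ht0]
      exact inv_mul_cancel₀ ht0.ne'
    have hQs : Q (t⁻¹ • y) = t⁻¹ * (t⁻¹ * Q y) := by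
      simp only [Q, PiLp.smul_apply, smul_eq_mul, mul_sum]
      exact Finset.sum_congr rfl fun i _ => Finset.sum_congr rfl fun j _ => by ring
    have hmx := hmin hxs
    simp only [Set.mem_setOf_eq, hQs] at hmx
    have hsum : ∑ i, x i ^ 2 = t ^ 2 := by
      rw [ht, EuclideanSpace.norm_eq, Real.sq_sqrt (by positivity)]
      exact Finset.sum_congr rfl fun i _ => by rw [Real.norm_eq_abs, sq_abs, hyx i]
    rw [hsum]
    have h2 : Q u * t ^ 2 ≤ (t⁻¹ * (t⁻¹ * Q y)) * t ^ 2 :=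
      mul_le_mul_of_nonneg_right hmx (by positivity)
    calc Q u * t ^ 2 ≤ _ := h2
      _ = Q y := by
        rw [show t⁻¹ * (t⁻¹ * Q y) * t ^ 2 = Q y * (t⁻¹ * t) * (t⁻¹ * t) from by ring,
          inv_mul_cancel₀ ht0.ne']
        ring

lemma theta_summable_pi_prod : ∀ {g : ℕ} (f : Fin g → ℤ → ℝ), (∀ i, Summable (f i)) →
    (∀ i k, 0 ≤ f i k) → Summable (fun n : Fin g → ℤ => ∏ i, f i (n i)) := by
  intro g
  induction g with
  | zero => intro f _ _; simpa using summable_of_finite_support (Set.toFinite _)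
  | succ m ih =>
    intro f hf h0
    set G : (Fin m → ℤ) → ℝ := fun q => ∏ i, f i.succ (q i) with hG
    have hGs : Summable G := ih _ (fun i => hf i.succ) (fun i k => h0 _ _)
    have hf0 : 0 ≤ f 0 := fun k => h0 0 k
    have hG0 : 0 ≤ G := fun q => Finset.prod_nonneg fun i _ => h0 _ _
    have h1 : Summable (fun p : ℤ × (Fin m → ℤ) => f 0 p.1 * G p.2) :=
      Summable.mul_of_nonneg (f := f 0) (g := G) (hf 0) hGs hf0 hG0
    have hinj : Function.Injective
        (fun n : Fin (m+1) → ℤ => ((n 0, fun i => n i.succ) : ℤ × (Fin m → ℤ))) := by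
      intro n n' h
      have h1' := congrArg Prod.fst h
      have h2' := congrArg Prod.snd h
      ext i
      refine Fin.cases h1' (fun j => congrFun h2' j) i
    have h2 := h1.comp_injective hinj
    refine h2.congr fun n => ?_
    show f 0 (n 0) * (∏ i : Fin m, f i.succ (n i.succ)) = ∏ i, f i (n i)
    exact (Fin.prod_univ_succ (fun i : Fin (m+1) => f i (n i))).symm

lemma theta_summable_1d {c : ℝ} (hc : 0 < c) (α B : ℝ) :
    Summable (fun k : ℤ => Real.exp (-π * c * ((k:ℝ) + α)^2 + 2 * π * B * |(k:ℝ) + α|)) := by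
  have hb := summable_pow_mul_jacobiTheta₂_term_bound (c * |α| + |B|) hc 0
  simp only [pow_zero, one_mul, Int.cast_abs] at hb
  refine Summable.of_nonneg_of_le (fun k => (Real.exp_pos _).le) (fun k => ?_)
    (hb.mul_left (Real.exp (π * (2 * |B| * |α|))))
  rw [← Real.exp_add, Real.exp_le_exp]
  have h1 : -(α * (k:ℝ)) ≤ |α| * |(k:ℝ)| := (neg_le_abs _).trans (abs_mul α (k:ℝ)).le
  have h2 : B * |(k:ℝ) + α| ≤ |B| * (|(k:ℝ)| + |α|) := by
    calc B * |(k:ℝ) + α| ≤ |B| * |(k:ℝ) + α| :=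
          mul_le_mul_of_nonneg_right (le_abs_self B) (abs_nonneg _)
      _ ≤ |B| * (|(k:ℝ)| + |α|) := mul_le_mul_of_nonneg_left (abs_add_le _ _) (abs_nonneg _)
  have hπ := Real.pi_pos
  have h3 : (2 * π * c) * -(α * (k:ℝ)) ≤ (2 * π * c) * (|α| * |(k:ℝ)|) :=
    mul_le_mul_of_nonneg_left h1 (by positivity)
  have h4 : (2 * π) * (B * |(k:ℝ) + α|) ≤ (2 * π) * (|B| * (|(k:ℝ)| + |α|)) :=
    mul_le_mul_of_nonneg_left h2 (by positivity)
  have h5 : 0 ≤ π * c * α ^ 2 := by positivity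
  nlinarith [h3, h4, h5]

/-- The Siegel upper half-space: symmetric complex `g × g` matrices with positive
definite imaginary part. -/
def SiegelUpperHalf (g : ℕ) : Set (Matrix (Fin g) (Fin g) ℂ) :=
  {Ω | Ω.IsSymm ∧ (Matrix.of fun i j => (Ω i j).im).PosDef}

/-- The general term of the theta series with characteristic `(a, b)`. -/
noncomputable def thetaTerm (g : ℕ) (a b : Fin g → ℚ) (z : Fin g → ℂ)
    (Ω : Matrix (Fin g) (Fin g) ℂ) (n : Fin g → ℤ) : ℂ :=
  Complex.exp (Real.pi * Complex.I *
      ((fun i => (n i : ℂ) + (a i : ℂ)) ⬝ᵥ Ω.mulVec (fun i => (n i : ℂ) + (a i : ℂ)))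
    + 2 * Real.pi * Complex.I *
      ((fun i => (n i : ℂ) + (a i : ℂ)) ⬝ᵥ (fun i => z i + (b i : ℂ))))

/-- The theta function with characteristic `(a, b)`. -/
noncomputable def theta (g : ℕ) (a b : Fin g → ℚ) (z : Fin g → ℂ)
    (Ω : Matrix (Fin g) (Fin g) ℂ) : ℂ :=
  ∑' n : Fin g → ℤ, thetaTerm g a b z Ω n

/-- The theta series is absolutely summable for `Ω` in the Siegel upper half-space. -/
theorem thetaTerm_summable_norm (g : ℕ) (hg : 1 ≤ g) (a b : Fin g → ℚ)
    (z : Fin g → ℂ) (Ω : Matrix (Fin g) (Fin g) ℂ) (hΩ : Ω ∈ SiegelUpperHalf g) :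
    Summable (fun n : Fin g → ℤ => ‖thetaTerm g a b z Ω n‖) := by
  classical
  set Y : Matrix (Fin g) (Fin g) ℝ := Matrix.of fun i j => (Ω i j).im with hYdef
  obtain ⟨c, hc, hcoer⟩ := theta_coercive hg Y hΩ.2
  set x : (Fin g → ℤ) → (Fin g → ℝ) := fun n i => (n i : ℝ) + (a i : ℝ) with hxdef
  set m : Fin g → ℝ := fun i => (z i).im with hmdef
  -- Step 1: compute the norm
  have hnorm : ∀ n : Fin g → ℤ, ‖thetaTerm g a b z Ω n‖
      = Real.exp (-π * (x n ⬝ᵥ Y.mulVec (x n)) - 2 * π * ∑ i, x n i * m i) := by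
    intro n
    have hv : (fun i => ((n i : ℂ) + (a i : ℂ))) = fun i => ((x n i : ℝ) : ℂ) := by
      funext i; simp only [hxdef]; push_cast; ring
    rw [thetaTerm, Complex.norm_exp]
    congr 1
    have hA : ((fun i => ((x n i : ℝ) : ℂ)) ⬝ᵥ Ω.mulVec (fun i => ((x n i : ℝ) : ℂ))).im
        = x n ⬝ᵥ Y.mulVec (x n) := by
      simp only [dotProduct, Matrix.mulVec, Complex.im_sum, Complex.mul_im,
        Complex.ofReal_re, Complex.ofReal_im, mul_zero, zero_mul, add_zero, zero_add,
        hYdef, Matrix.of_apply]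
    have hB : ((fun i => ((x n i : ℝ) : ℂ)) ⬝ᵥ (fun i => z i + (b i : ℂ))).im
        = ∑ i, x n i * m i := by
      simp only [dotProduct, Complex.im_sum, Complex.mul_im, Complex.ofReal_re,
        Complex.ofReal_im, Complex.add_im, Complex.ratCast_im, add_zero, zero_mul,
        hmdef]
    rw [hv]
    rw [show ∀ A B : ℂ, (↑π * Complex.I * A + 2 * ↑π * Complex.I * B).re
        = -(π * A.im) - 2 * π * B.im from fun A B => by
      simp only [Complex.add_re, Complex.mul_re, Complex.mul_im, Complex.I_re, Complex.I_im,
        Complex.ofReal_re, Complex.ofReal_im, Complex.re_ofNat, Complex.im_ofNat]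
      ring]
    rw [hA, hB]
    ring
  -- Step 2: comparison function
  set f : Fin g → ℤ → ℝ := fun i k =>
    Real.exp (-π * c * ((k:ℝ) + (a i : ℝ))^2 + 2 * π * |m i| * |(k:ℝ) + (a i : ℝ)|) with hfdef
  have hfs : ∀ i, Summable (f i) := fun i => theta_summable_1d hc (a i : ℝ) |m i|
  have hf0 : ∀ i k, 0 ≤ f i k := fun i k => (Real.exp_pos _).le
  refine Summable.of_nonneg_of_le (fun n => norm_nonneg _) (fun n => ?_)
    (theta_summable_pi_prod f hfs hf0)
  rw [hnorm n]
  have hprod : ∏ i, f i (n i) = Real.exp (∑ i,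
      (-π * c * (x n i)^2 + 2 * π * |m i| * |x n i|)) := by
    rw [Real.exp_sum]
  rw [hprod, Real.exp_le_exp]
  have hQ := hcoer (x n)
  have hL : -(∑ i, x n i * m i) ≤ ∑ i, |m i| * |x n i| := by
    rw [← Finset.sum_neg_distrib]
    refine Finset.sum_le_sum fun i _ => ?_
    calc -(x n i * m i) ≤ |x n i * m i| := neg_le_abs _
      _ = |x n i| * |m i| := abs_mul _ _
      _ = |m i| * |x n i| := mul_comm _ _
  have hR : ∑ i, (-π * c * (x n i)^2 + 2 * π * |m i| * |x n i|)
      = -π * (c * ∑ i, x n i ^ 2) + 2 * π * ∑ i, |m i| * |x n i| := by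
    rw [Finset.sum_add_distrib]
    congr 1
    · simp only [Finset.mul_sum]; exact Finset.sum_congr rfl fun i _ => by ring
    · simp only [Finset.mul_sum]; exact Finset.sum_congr rfl fun i _ => by ring
  rw [hR]
  have hπ := Real.pi_pos
  have h1 : π * (c * ∑ i, x n i ^ 2) ≤ π * (x n ⬝ᵥ Y.mulVec (x n)) :=
    mul_le_mul_of_nonneg_left hQ hπ.le
  have h2 : (2 * π) * -(∑ i, x n i * m i) ≤ (2 * π) * ∑ i, |m i| * |x n i| :=
    mul_le_mul_of_nonneg_left hL (by positivity)
  linarith
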